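/- Let p ≥ 1, let 0 < μ < L be real numbers, set Q = L/μ, and let ν ∈ ℝ. Suppose s_μ and s_L are monic polynomials of degree p with real coefficients satisfying s_μ(1) = −ν·μ and s_L(1) = −ν·L. Then max{ ρ(s_μ), ρ(s_L) } ≥ (Q^{1/p} − 1) / (Q^{1/p} + 1). -/

import Mathlib

/-- The spectral radius of a complex polynomial: the maximum modulus of its
complex roots. -/
noncomputable def polyRad (q : Polynomial ℂ) : ℝ :=
  sSup ((fun z : ℂ => ‖z‖) '' {z : ℂ | q.IsRoot z})

lemma aux_prod_le (C : ℝ) (hC : 0 ≤ C) (m : Multiset ℂ)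
    (h : ∀ z ∈ m, ‖z‖ ≤ C) :
    ‖m.prod‖ ≤ C ^ Multiset.card m := by
  induction m using Multiset.induction_on with
  | empty => simp
  | cons a s ih =>
    simp only [Multiset.prod_cons, Multiset.card_cons, norm_mul, pow_succ']
    exact mul_le_mul (h a (Multiset.mem_cons_self a s))
      (ih fun z hz => h z (Multiset.mem_cons_of_mem hz))
      (by positivity) hC

lemma aux_le_prod (c : ℝ) (hc : 0 ≤ c) (m : Multiset ℂ)
    (h : ∀ z ∈ m, c ≤ ‖z‖) :
    c ^ Multiset.card m ≤ ‖m.prod‖ := by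
  induction m using Multiset.induction_on with
  | empty => simp
  | cons a s ih =>
    simp only [Multiset.prod_cons, Multiset.card_cons, norm_mul, pow_succ']
    exact mul_le_mul (h a (Multiset.mem_cons_self a s))
      (ih fun z hz => h z (Multiset.mem_cons_of_mem hz))
      (by positivity) (norm_nonneg _)

lemma aux_key (q : Polynomial ℂ) (hm : q.Monic) (p : ℕ) (hd : q.natDegree = p)
    (r : ℝ) (hr0 : 0 ≤ r) (hr1 : r ≤ 1)
    (hr : ∀ z : ℂ, q.IsRoot z → ‖z‖ ≤ r) :
    (1 - r) ^ p ≤ ‖q.eval 1‖ ∧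
      ‖q.eval 1‖ ≤ (1 + r) ^ p := by
  have hs : q.Splits := IsAlgClosed.splits q
  have hcard : Multiset.card q.roots = p := by
    rw [Polynomial.splits_iff_card_roots.mp hs, hd]
  have heq : q = (q.roots.map fun a => Polynomial.X - Polynomial.C a).prod :=
    hs.eq_prod_roots_of_monic hm
  have heval : q.eval 1 = (q.roots.map fun a => 1 - a).prod := by
    conv_lhs => rw [heq]
    rw [Polynomial.eval_multiset_prod, Multiset.map_map]
    congr 1
    apply Multiset.map_congr rfl
    intro a _
    simp
  have hcard2 : Multiset.card (q.roots.map fun a => 1 - a) = p := by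
    rw [Multiset.card_map, hcard]
  have hmem : ∀ z ∈ q.roots.map fun a => 1 - a,
      1 - r ≤ ‖z‖ ∧ ‖z‖ ≤ 1 + r := by
    intro z hz
    obtain ⟨a, ha, rfl⟩ := Multiset.mem_map.mp hz
    have haroot : q.IsRoot a := (Polynomial.mem_roots hm.ne_zero).mp ha
    have habs : ‖a‖ ≤ r := hr a haroot
    have h1 : ‖(1:ℂ)‖ ≤ ‖1 - a‖ + ‖a‖ := by
      calc ‖(1:ℂ)‖ = ‖(1 - a) + a‖ := by ring_nf
        _ ≤ _ := norm_add_le _ _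
    have h2 : ‖1 - a‖ ≤ ‖(1:ℂ)‖ + ‖a‖ := by
      calc ‖1 - a‖ = ‖1 + (-a)‖ := by ring_nf
        _ ≤ ‖(1:ℂ)‖ + ‖-a‖ := norm_add_le _ _
        _ = ‖(1:ℂ)‖ + ‖a‖ := by rw [norm_neg]
    simp only [norm_one] at h1 h2
    constructor <;> linarith
  rw [heval, ← hcard2]
  exact ⟨aux_le_prod _ (by linarith) _ (fun z hz => (hmem z hz).1),
    aux_prod_le _ (by linarith) _ (fun z hz => (hmem z hz).2)⟩

theorem stmt_14 (p : ℕ) (hp : 1 ≤ p) (μ L ν : ℝ) (hμ : 0 < μ) (hμL : μ < L)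
    (sμ sL : Polynomial ℝ)
    (hmμ : sμ.Monic) (hdμ : sμ.natDegree = p)
    (hmL : sL.Monic) (hdL : sL.natDegree = p)
    (h1μ : sμ.eval 1 = -ν * μ) (h1L : sL.eval 1 = -ν * L) :
    ((L / μ) ^ (1 / (p : ℝ)) - 1) / ((L / μ) ^ (1 / (p : ℝ)) + 1) ≤
      max (polyRad (sμ.map (algebraMap ℝ ℂ)))
          (polyRad (sL.map (algebraMap ℝ ℂ))) := by
  set qμ := sμ.map (algebraMap ℝ ℂ) with hqμdef
  set qL := sL.map (algebraMap ℝ ℂ) with hqLdef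
  have hmμ' : qμ.Monic := hmμ.map _
  have hmL' : qL.Monic := hmL.map _
  have hdμ' : qμ.natDegree = p := by rw [hqμdef, hmμ.natDegree_map, hdμ]
  have hdL' : qL.natDegree = p := by rw [hqLdef, hmL.natDegree_map, hdL]
  have hQ : 1 < L / μ := (one_lt_div hμ).2 hμL
  have hpR : (0:ℝ) < 1 / (p:ℝ) := by
    have : (0:ℝ) < (p:ℝ) := by exact_mod_cast hp
    positivity
  set x := (L / μ) ^ (1 / (p : ℝ)) with hxdef
  have hx : 1 < x := by
    rw [hxdef]
    exact (Real.one_lt_rpow_iff_of_pos (by linarith)).2 (Or.inl ⟨hQ, hpR⟩)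
  have ht1 : (x - 1) / (x + 1) < 1 := by
    rw [div_lt_one (by linarith)]; linarith
  -- basic facts about polyRad
  have hbddμ : BddAbove ((fun z : ℂ => ‖z‖) '' {z : ℂ | qμ.IsRoot z}) :=
    ((Polynomial.finite_setOf_isRoot hmμ'.ne_zero).image _).bddAbove
  have hbddL : BddAbove ((fun z : ℂ => ‖z‖) '' {z : ℂ | qL.IsRoot z}) :=
    ((Polynomial.finite_setOf_isRoot hmL'.ne_zero).image _).bddAbove
  have hleμ : ∀ z : ℂ, qμ.IsRoot z → ‖z‖ ≤ polyRad qμ :=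
    fun z hz => le_csSup hbddμ ⟨z, hz, rfl⟩
  have hleL : ∀ z : ℂ, qL.IsRoot z → ‖z‖ ≤ polyRad qL :=
    fun z hz => le_csSup hbddL ⟨z, hz, rfl⟩
  -- polyRad qμ nonneg
  have hrootμ : ∃ z : ℂ, qμ.IsRoot z := by
    apply IsAlgClosed.exists_root
    rw [Polynomial.degree_eq_natDegree hmμ'.ne_zero, hdμ']
    exact_mod_cast Nat.one_le_iff_ne_zero.mp hp ∘ (by exact_mod_cast ·)
  have hradμ0 : 0 ≤ polyRad qμ := by
    obtain ⟨z, hz⟩ := hrootμ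
    exact (norm_nonneg z).trans (hleμ z hz)
  -- eval values
  have hevμ : ‖qμ.eval 1‖ = |ν| * μ := by
    rw [hqμdef, Polynomial.eval_one_map, h1μ]
    simp [Complex.norm_real, abs_mul, abs_of_pos hμ]
  have hevL : ‖qL.eval 1‖ = |ν| * L := by
    rw [hqLdef, Polynomial.eval_one_map, h1L]
    simp [Complex.norm_real, abs_mul, abs_of_pos (hμ.trans hμL)]
  by_cases hν : ν = 0
  · -- 1 is a root of qμ
    have h1root : qμ.IsRoot 1 := by
      rw [Polynomial.IsRoot, hqμdef, Polynomial.eval_one_map, h1μ, hν]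
      simp
    have : (1:ℝ) ≤ polyRad qμ := by
      have := hleμ 1 h1root
      simpa using this
    calc (x - 1) / (x + 1) ≤ 1 := ht1.le
      _ ≤ polyRad qμ := this
      _ ≤ _ := le_max_left _ _
  · by_contra h
    push_neg at h
    set r := max (polyRad qμ) (polyRad qL) with hrdef
    have hrt : r < (x - 1) / (x + 1) := h
    have hr0 : 0 ≤ r := hradμ0.trans (le_max_left _ _)
    have hr1 : r < 1 := hrt.trans ht1
    have hboundμ := aux_key qμ hmμ' p hdμ' r hr0 hr1.le
      (fun z hz => (hleμ z hz).trans (le_max_left _ _))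
    have hboundL := aux_key qL hmL' p hdL' r hr0 hr1.le
      (fun z hz => (hleL z hz).trans (le_max_right _ _))
    rw [hevμ] at hboundμ
    rw [hevL] at hboundL
    have hν' : 0 < |ν| := abs_pos.mpr hν
    have h1r : 0 < 1 - r := by linarith
    have hQle : L / μ ≤ ((1 + r) / (1 - r)) ^ p := by
      rw [div_pow]
      have hnum : |ν| * L ≤ (1 + r) ^ p := hboundL.2
      have hden : (1 - r) ^ p ≤ |ν| * μ := hboundμ.1
      have hdenpos : (0:ℝ) < (1 - r) ^ p := by positivity
      rw [div_le_div_iff₀ hμ hdenpos]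
      calc L * (1 - r) ^ p ≤ L * (|ν| * μ) := by
            apply mul_le_mul_of_nonneg_left hden (by linarith)
        _ = (|ν| * L) * μ := by ring
        _ ≤ (1 + r) ^ p * μ := mul_le_mul_of_nonneg_right hnum hμ.le
    have hxle : x ≤ (1 + r) / (1 - r) := by
      have hbase : (0:ℝ) ≤ (1 + r) / (1 - r) := by positivity
      have := Real.rpow_le_rpow (by linarith : (0:ℝ) ≤ L / μ) hQle hpR.le
      rwa [one_div, Real.pow_rpow_inv_natCast hbase (Nat.one_le_iff_ne_zero.mp hp),
        ← one_div] at this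
    have hxr : x * (1 - r) ≤ 1 + r := (le_div_iff₀ h1r).mp hxle
    have : (x - 1) / (x + 1) ≤ r := by
      rw [div_le_iff₀ (by linarith)]
      nlinarith
    linarith
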